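/- Let f : ω₁ → ω₁ be strictly increasing, let λ ≥ ω₁, and let g : λ^{<ω} → λ be a function such that every g-closed countable σ ⊆ λ satisfies: σ ∩ ω₁ is an ordinal, otp(σ) < f(σ ∩ ω₁), and σ ∩ ω₁ is closed under f. Then for every g-closed countable σ ⊆ λ, the order type of σ is not in the range of f. -/

import Mathlib

/-- The first uncountable ordinal `ω₁`. -/
noncomputable def omega1 : Ordinal := (Cardinal.aleph 1).ord

/-- The order type of a set of ordinals (under `∈`, i.e. `<`). -/
noncomputable def otp (s : Set Ordinal.{0}) : Ordinal.{1} :=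
  letI : IsWellOrder s (Subrel (· < ·) (· ∈ s)) :=
    RelEmbedding.isWellOrder (Subrel.relEmbedding (· < ·) (· ∈ s))
  Ordinal.type (Subrel (· < ·) (· ∈ s))

lemma otp_mono {s t : Set Ordinal.{0}} (h : s ⊆ t) : otp s ≤ otp t := by
  letI : IsWellOrder s (Subrel (· < ·) (· ∈ s)) :=
    RelEmbedding.isWellOrder (Subrel.relEmbedding (· < ·) (· ∈ s))
  letI : IsWellOrder t (Subrel (· < ·) (· ∈ t)) :=
    RelEmbedding.isWellOrder (Subrel.relEmbedding (· < ·) (· ∈ t))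
  refine Ordinal.type_le_iff'.2 ⟨⟨⟨Set.inclusion h, Set.inclusion_injective h⟩, Iff.rfl⟩⟩

lemma otp_Iio (a : Ordinal.{0}) : otp (Set.Iio a) = Ordinal.lift.{1} a :=
  (Ordinal.type_subrel LT.lt a).trans (Ordinal.typein_ordinal a)

/-- If `f : ω₁ → ω₁` is strictly increasing and `g : λ^{<ω} → λ` is such that every
`g`-closed countable `σ ⊆ λ` satisfies: `σ ∩ ω₁` is an ordinal `d < ω₁`,
`otp(σ) < f(d)`, and `d` is closed under `f`, then the order type of every `g`-closed
countable `σ ⊆ λ` is not in the range of `f`. -/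
theorem stmt_11 (f : Ordinal → Ordinal)
    (hf1 : ∀ a < omega1, f a < omega1) (hf2 : StrictMonoOn f (Set.Iio omega1))
    (l : Ordinal) (hl : omega1 ≤ l)
    (g : List Ordinal → Ordinal)
    (hg : ∀ lst : List Ordinal, (∀ o ∈ lst, o < l) → g lst < l)
    (H : ∀ σ : Set Ordinal, σ ⊆ Set.Iio l → σ.Countable →
      (∀ lst : List Ordinal, (∀ o ∈ lst, o ∈ σ) → g lst ∈ σ) →
      ∃ d < omega1, σ ∩ Set.Iio omega1 = Set.Iio d ∧
        otp σ < Ordinal.lift.{1} (f d) ∧ ∀ b < d, f b < d)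
    (σ : Set Ordinal) (hσ1 : σ ⊆ Set.Iio l) (hσ2 : σ.Countable)
    (hσ3 : ∀ lst : List Ordinal, (∀ o ∈ lst, o ∈ σ) → g lst ∈ σ) :
    ∀ b < omega1, otp σ ≠ Ordinal.lift.{1} (f b) := by
  intro b hb heq
  obtain ⟨d, hd, hinter, hlt, hcl⟩ := H σ hσ1 hσ2 hσ3
  have hfb : f b < f d := by
    have := heq ▸ hlt
    exact (Ordinal.lift_lt).1 this
  have hbd : b < d := by
    by_contra hnot
    push_neg at hnot
    exact absurd hfb (not_lt.2 (hf2.monotoneOn hd hb hnot))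
  have hfbd : f b < d := hcl b hbd
  have hsub : Set.Iio d ⊆ σ := by
    rw [← hinter]; exact Set.inter_subset_left
  have : Ordinal.lift.{1} d ≤ otp σ := by
    rw [← otp_Iio]; exact otp_mono hsub
  rw [heq] at this
  exact absurd ((Ordinal.lift_le).1 this) (not_le.2 hfbd)
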